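/- Let Γ be a finite simplicial graph with vertex set S, and let T₁, T₂ ⊆ S be such that no vertex of T₁ \ T₂ is adjacent in Γ to any vertex of T₂ \ T₁. Then the special subgroup W_{T₁ ∪ T₂} of the right-angled Coxeter group W_Γ is isomorphic to the amalgamated free product W_{T₁} *_{W_{T₁ ∩ T₂}} W_{T₂}. -/

import Mathlib

/-- The set of relators of the right-angled Coxeter group of a graph `Γ`:
squares of the generators, and commutators of generators joined by an edge. -/
def racgRels {V : Type*} (Γ : SimpleGraph V) : Set (FreeGroup V) :=
  {r | (∃ s : V, r = FreeGroup.of s * FreeGroup.of s) ∨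
       (∃ s t : V, Γ.Adj s t ∧
         r = FreeGroup.of s * FreeGroup.of t * (FreeGroup.of s)⁻¹ * (FreeGroup.of t)⁻¹)}

/-- The right-angled Coxeter group of a graph `Γ`. -/
abbrev RACG {V : Type*} (Γ : SimpleGraph V) : Type _ := PresentedGroup (racgRels Γ)

/-- The generator of `RACG Γ` corresponding to a vertex `s`. -/
def racgGen {V : Type*} (Γ : SimpleGraph V) (s : V) : RACG Γ :=
  PresentedGroup.of (rels := racgRels Γ) s

universe u

/-- A two-element family of groups indexed by `Bool`, used to form binary
amalgamated free products via `Monoid.PushoutI`. -/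
def famG (G₁ G₂ : Type u) : Bool → Type u
  | true => G₁
  | false => G₂

instance famGGroup (G₁ G₂ : Type u) [Group G₁] [Group G₂] : ∀ b, Group (famG G₁ G₂ b)
  | true => ‹Group G₁›
  | false => ‹Group G₂›

/-- The pair of amalgamating homomorphisms, as a `Bool`-indexed family. -/
def famHom {A G₁ G₂ : Type u} [Group A] [Group G₁] [Group G₂]
    (f : A →* G₁) (g : A →* G₂) : ∀ b, A →* famG G₁ G₂ b
  | true => f
  | false => g

/-- The amalgamated free product `G₁ *_A G₂` along `f : A →* G₁`, `g : A →* G₂`. -/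
abbrev AmalgProd {A G₁ G₂ : Type u} [Group A] [Group G₁] [Group G₂]
    (f : A →* G₁) (g : A →* G₂) : Type u :=
  Monoid.PushoutI (famHom f g)

namespace Stmt16Aux

open Monoid

variable {V : Type u} {Γ : SimpleGraph V}

theorem racg_mk_rel {r : FreeGroup V} (hr : r ∈ racgRels Γ) :
    PresentedGroup.mk (racgRels Γ) r = 1 :=
  (QuotientGroup.eq_one_iff r).2 (Subgroup.subset_normalClosure hr)

theorem racgGen_sq (s : V) : racgGen Γ s * racgGen Γ s = 1 := by
  have := racg_mk_rel (Γ := Γ) (Or.inl ⟨s, rfl⟩)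
  simpa [racgGen, PresentedGroup.of] using this

theorem eq_one_of_comm {G : Type*} [Group G] {a b : G} (h : a * b = b * a) :
    a * b * a⁻¹ * b⁻¹ = 1 := by
  rw [mul_assoc, ← mul_inv_rev, mul_inv_eq_one]; exact h

theorem racgGen_comm {s t : V} (h : Γ.Adj s t) :
    racgGen Γ s * racgGen Γ t = racgGen Γ t * racgGen Γ s := by
  have h1 := racg_mk_rel (Γ := Γ) (Or.inr ⟨s, t, h, rfl⟩)
  simp only [racgGen, PresentedGroup.of, map_mul, map_inv] at h1 ⊢
  rw [mul_assoc, ← mul_inv_rev, mul_inv_eq_one] at h1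
  exact h1

/-- The natural map from the RACG of the induced graph to the ambient RACG. -/
def iotaT (Γ : SimpleGraph V) (T : Set V) : RACG (Γ.induce T) →* RACG Γ :=
  PresentedGroup.toGroup (f := fun s => racgGen Γ s.val) <| by
    rintro r (⟨s, rfl⟩ | ⟨s, t, hst, rfl⟩)
    · simpa using racgGen_sq (Γ := Γ) s.val
    · simpa using eq_one_of_comm (racgGen_comm (Γ := Γ) hst)

@[simp] theorem iotaT_of (T : Set V) (s : T) :
    iotaT Γ T (racgGen (Γ.induce T) s) = racgGen Γ s.val :=
  PresentedGroup.toGroup.of _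

open Classical in
/-- The retraction from the ambient RACG to the RACG of the induced graph. -/
noncomputable def rhoT (Γ : SimpleGraph V) (T : Set V) : RACG Γ →* RACG (Γ.induce T) :=
  PresentedGroup.toGroup
    (f := fun s => if h : s ∈ T then racgGen (Γ.induce T) ⟨s, h⟩ else 1) <| by
    rintro r (⟨s, rfl⟩ | ⟨s, t, hst, rfl⟩)
    · by_cases h : s ∈ T
      · simpa [h] using racgGen_sq (Γ := Γ.induce T) ⟨s, h⟩
      · simp [h]
    · by_cases hs : s ∈ T <;> by_cases ht : t ∈ T <;> simp [hs, ht]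
      exact eq_one_of_comm (racgGen_comm (Γ := Γ.induce T)
        (by simpa using hst : (Γ.induce T).Adj ⟨s, hs⟩ ⟨t, ht⟩))

theorem rhoT_gen_mem (T : Set V) {s : V} (h : s ∈ T) :
    rhoT Γ T (racgGen Γ s) = racgGen (Γ.induce T) ⟨s, h⟩ := by
  show PresentedGroup.toGroup _ (PresentedGroup.of s) = _
  rw [PresentedGroup.toGroup.of, dif_pos h]

theorem rhoT_comp_iotaT (Γ : SimpleGraph V) (T : Set V) :
    (rhoT Γ T).comp (iotaT Γ T) = MonoidHom.id _ := by
  ext x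
  simp only [MonoidHom.comp_apply, MonoidHom.id_apply]
  show rhoT Γ T (iotaT Γ T (racgGen (Γ.induce T) x)) = racgGen (Γ.induce T) x
  rw [iotaT_of, rhoT_gen_mem T x.property]

theorem iotaT_injective (Γ : SimpleGraph V) (T : Set V) :
    Function.Injective (iotaT Γ T) := by
  intro a b hab
  have h1 := DFunLike.congr_fun (rhoT_comp_iotaT Γ T) a
  have h2 := DFunLike.congr_fun (rhoT_comp_iotaT Γ T) b
  simp only [MonoidHom.comp_apply, MonoidHom.id_apply] at h1 h2
  rw [← h1, ← h2, hab]

theorem iotaT_range (Γ : SimpleGraph V) (T : Set V) :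
    (iotaT Γ T).range = Subgroup.closure (racgGen Γ '' T) := by
  rw [MonoidHom.range_eq_map, ← PresentedGroup.closure_range_of (racgRels (Γ.induce T)),
    MonoidHom.map_closure]
  congr 1
  ext x
  constructor
  · rintro ⟨y, ⟨s, rfl⟩, rfl⟩
    exact ⟨s.val, s.property, (iotaT_of T s).symm⟩
  · rintro ⟨v, hv, rfl⟩
    exact ⟨racgGen (Γ.induce T) ⟨v, hv⟩, ⟨⟨v, hv⟩, rfl⟩, iotaT_of T ⟨v, hv⟩⟩

/-- The RACG of the induced graph is isomorphic to the special subgroup. -/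
noncomputable def eqvT (Γ : SimpleGraph V) (T : Set V) :
    RACG (Γ.induce T) ≃* Subgroup.closure (racgGen Γ '' T) :=
  (MonoidHom.ofInjective (iotaT_injective Γ T)).trans
    (MulEquiv.subgroupCongr (iotaT_range Γ T))


section Main

open Monoid

variable {V : Type u} (Γ : SimpleGraph V) (T₁ T₂ : Set V)

/-- First inclusion. -/
def incl1 : ↥(Subgroup.closure (racgGen Γ '' (T₁ ∩ T₂))) →* ↥(Subgroup.closure (racgGen Γ '' T₁)) :=
  Subgroup.inclusion (Subgroup.closure_mono (Set.image_mono Set.inter_subset_left))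

/-- Second inclusion. -/
def incl2 : ↥(Subgroup.closure (racgGen Γ '' (T₁ ∩ T₂))) →* ↥(Subgroup.closure (racgGen Γ '' T₂)) :=
  Subgroup.inclusion (Subgroup.closure_mono (Set.image_mono Set.inter_subset_right))

theorem mem_clos {T : Set V} {s : V} (hs : s ∈ T) :
    racgGen Γ s ∈ Subgroup.closure (racgGen Γ '' T) :=
  Subgroup.subset_closure ⟨s, hs, rfl⟩

/-- The embedding of the first factor into the amalgam. -/
def inj1 : ↥(Subgroup.closure (racgGen Γ '' T₁)) →* AmalgProd (incl1 Γ T₁ T₂) (incl2 Γ T₁ T₂) :=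
  PushoutI.of (φ := famHom (incl1 Γ T₁ T₂) (incl2 Γ T₁ T₂)) true

/-- The embedding of the second factor into the amalgam. -/
def inj2 : ↥(Subgroup.closure (racgGen Γ '' T₂)) →* AmalgProd (incl1 Γ T₁ T₂) (incl2 Γ T₁ T₂) :=
  PushoutI.of (φ := famHom (incl1 Γ T₁ T₂) (incl2 Γ T₁ T₂)) false

theorem inj_agree {s : V} (h1 : s ∈ T₁) (h2 : s ∈ T₂) :
    inj1 Γ T₁ T₂ ⟨racgGen Γ s, mem_clos Γ h1⟩ = inj2 Γ T₁ T₂ ⟨racgGen Γ s, mem_clos Γ h2⟩ := by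
  have e1 := PushoutI.of_apply_eq_base (φ := famHom (incl1 Γ T₁ T₂) (incl2 Γ T₁ T₂)) true
    ⟨racgGen Γ s, mem_clos Γ (⟨h1, h2⟩ : s ∈ T₁ ∩ T₂)⟩
  have e2 := PushoutI.of_apply_eq_base (φ := famHom (incl1 Γ T₁ T₂) (incl2 Γ T₁ T₂)) false
    ⟨racgGen Γ s, mem_clos Γ (⟨h1, h2⟩ : s ∈ T₁ ∩ T₂)⟩
  have k1 : (famHom (incl1 Γ T₁ T₂) (incl2 Γ T₁ T₂) true)
      ⟨racgGen Γ s, mem_clos Γ (⟨h1, h2⟩ : s ∈ T₁ ∩ T₂)⟩ = ⟨racgGen Γ s, mem_clos Γ h1⟩ :=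
    Subtype.ext rfl
  have k2 : (famHom (incl1 Γ T₁ T₂) (incl2 Γ T₁ T₂) false)
      ⟨racgGen Γ s, mem_clos Γ (⟨h1, h2⟩ : s ∈ T₁ ∩ T₂)⟩ = ⟨racgGen Γ s, mem_clos Γ h2⟩ :=
    Subtype.ext rfl
  rw [k1] at e1; rw [k2] at e2
  show PushoutI.of true _ = PushoutI.of false _
  rw [e1, e2]

theorem inj1_comm {x y : ↥(Subgroup.closure (racgGen Γ '' T₁))}
    (hc : (x : RACG Γ) * y = y * x) :
    inj1 Γ T₁ T₂ x * inj1 Γ T₁ T₂ y = inj1 Γ T₁ T₂ y * inj1 Γ T₁ T₂ x := by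
  rw [← map_mul, ← map_mul]
  exact congrArg _ (Subtype.ext hc)

theorem inj2_comm {x y : ↥(Subgroup.closure (racgGen Γ '' T₂))}
    (hc : (x : RACG Γ) * y = y * x) :
    inj2 Γ T₁ T₂ x * inj2 Γ T₁ T₂ y = inj2 Γ T₁ T₂ y * inj2 Γ T₁ T₂ x := by
  rw [← map_mul, ← map_mul]
  exact congrArg _ (Subtype.ext hc)

open Classical in
/-- The image of a generator of `W_{T₁ ∪ T₂}` in the amalgam. -/
noncomputable def genImg (s : ↥(T₁ ∪ T₂)) : AmalgProd (incl1 Γ T₁ T₂) (incl2 Γ T₁ T₂) :=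
  if h1 : (s : V) ∈ T₁ then inj1 Γ T₁ T₂ ⟨racgGen Γ s, mem_clos Γ h1⟩
  else inj2 Γ T₁ T₂ ⟨racgGen Γ s, mem_clos Γ (s.property.resolve_left h1)⟩

theorem genImg_comm (h : ∀ x ∈ T₁ \ T₂, ∀ y ∈ T₂ \ T₁, ¬ Γ.Adj x y)
    {s t : ↥(T₁ ∪ T₂)} (hst : Γ.Adj s t) :
    genImg Γ T₁ T₂ s * genImg Γ T₁ T₂ t = genImg Γ T₁ T₂ t * genImg Γ T₁ T₂ s := by
  unfold genImg
  by_cases hs : (s : V) ∈ T₁ <;> by_cases ht : (t : V) ∈ T₁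
  · rw [dif_pos hs, dif_pos ht]
    exact inj1_comm Γ T₁ T₂ (racgGen_comm hst)
  · -- s ∈ T₁, t ∉ T₁ (so t ∈ T₂); then s ∈ T₂
    have ht2 : (t : V) ∈ T₂ := t.property.resolve_left ht
    have hs2 : (s : V) ∈ T₂ := by
      by_contra hs2
      exact h s ⟨hs, hs2⟩ t ⟨ht2, ht⟩ hst
    rw [dif_pos hs, dif_neg ht, inj_agree Γ T₁ T₂ hs hs2]
    exact inj2_comm Γ T₁ T₂ (racgGen_comm hst)
  · have hs2 : (s : V) ∈ T₂ := s.property.resolve_left hs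
    have ht2 : (t : V) ∈ T₂ := by
      by_contra ht2
      exact h t ⟨ht, ht2⟩ s ⟨hs2, hs⟩ hst.symm
    rw [dif_neg hs, dif_pos ht, inj_agree Γ T₁ T₂ ht ht2]
    exact inj2_comm Γ T₁ T₂ (racgGen_comm hst)
  · rw [dif_neg hs, dif_neg ht]
    exact inj2_comm Γ T₁ T₂ (racgGen_comm hst)

theorem genImg_sq (s : ↥(T₁ ∪ T₂)) : genImg Γ T₁ T₂ s * genImg Γ T₁ T₂ s = 1 := by
  unfold genImg
  by_cases hs : (s : V) ∈ T₁
  · rw [dif_pos hs, ← map_mul]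
    exact (congrArg _ (Subtype.ext (racgGen_sq (s : V)))).trans (map_one _)
  · rw [dif_neg hs, ← map_mul]
    exact (congrArg _ (Subtype.ext (racgGen_sq (s : V)))).trans (map_one _)

/-- The homomorphism `W_{T₁ ∪ T₂} → W_{T₁} *_{W_{T₁ ∩ T₂}} W_{T₂}`. -/
noncomputable def alpha (h : ∀ x ∈ T₁ \ T₂, ∀ y ∈ T₂ \ T₁, ¬ Γ.Adj x y) :
    RACG (Γ.induce (T₁ ∪ T₂)) →* AmalgProd (incl1 Γ T₁ T₂) (incl2 Γ T₁ T₂) :=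
  PresentedGroup.toGroup (f := genImg Γ T₁ T₂) <| by
    rintro r (⟨s, rfl⟩ | ⟨s, t, hst, rfl⟩)
    · simpa using genImg_sq Γ T₁ T₂ s
    · simpa using eq_one_of_comm (genImg_comm Γ T₁ T₂ h (by simpa using hst))

theorem alpha_gen (h : ∀ x ∈ T₁ \ T₂, ∀ y ∈ T₂ \ T₁, ¬ Γ.Adj x y) (s : ↥(T₁ ∪ T₂)) :
    alpha Γ T₁ T₂ h (racgGen (Γ.induce (T₁ ∪ T₂)) s) = genImg Γ T₁ T₂ s :=
  PresentedGroup.toGroup.of _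

/-- The homomorphism `W_{T₁} *_{W_{T₁ ∩ T₂}} W_{T₂} → W_{T₁ ∪ T₂}`. -/
noncomputable def beta : AmalgProd (incl1 Γ T₁ T₂) (incl2 Γ T₁ T₂) →* RACG (Γ.induce (T₁ ∪ T₂)) :=
  PushoutI.lift
    (fun b => match b with
      | true => (rhoT Γ (T₁ ∪ T₂)).comp (Subgroup.closure (racgGen Γ '' T₁)).subtype
      | false => (rhoT Γ (T₁ ∪ T₂)).comp (Subgroup.closure (racgGen Γ '' T₂)).subtype)
    ((rhoT Γ (T₁ ∪ T₂)).comp (Subgroup.closure (racgGen Γ '' (T₁ ∩ T₂))).subtype)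
    (by rintro (_ | _) <;> exact MonoidHom.ext fun x => rfl)

set_option maxHeartbeats 1000000 in
theorem beta_inj1 (x : ↥(Subgroup.closure (racgGen Γ '' T₁))) :
    beta Γ T₁ T₂ (inj1 Γ T₁ T₂ x) = rhoT Γ (T₁ ∪ T₂) (x : RACG Γ) := by
  exact PushoutI.lift_of (φ := famHom (incl1 Γ T₁ T₂) (incl2 Γ T₁ T₂)) _ _ _ (i := true) x

set_option maxHeartbeats 1000000 in
theorem beta_inj2 (x : ↥(Subgroup.closure (racgGen Γ '' T₂))) :
    beta Γ T₁ T₂ (inj2 Γ T₁ T₂ x) = rhoT Γ (T₁ ∪ T₂) (x : RACG Γ) := by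
  exact PushoutI.lift_of (φ := famHom (incl1 Γ T₁ T₂) (incl2 Γ T₁ T₂)) _ _ _ (i := false) x

theorem beta_comp_alpha (h : ∀ x ∈ T₁ \ T₂, ∀ y ∈ T₂ \ T₁, ¬ Γ.Adj x y) :
    (beta Γ T₁ T₂).comp (alpha Γ T₁ T₂ h) = MonoidHom.id _ := by
  ext s
  simp only [MonoidHom.comp_apply, MonoidHom.id_apply]
  show beta Γ T₁ T₂ (alpha Γ T₁ T₂ h (racgGen (Γ.induce (T₁ ∪ T₂)) s)) =
    racgGen (Γ.induce (T₁ ∪ T₂)) s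
  rw [alpha_gen]
  unfold genImg
  by_cases hs : (s : V) ∈ T₁
  · rw [dif_pos hs, beta_inj1]
    show rhoT Γ (T₁ ∪ T₂) (racgGen Γ (s : V)) = _
    rw [rhoT_gen_mem _ (Set.mem_union_left T₂ hs)]
  · rw [dif_neg hs, beta_inj2]
    show rhoT Γ (T₁ ∪ T₂) (racgGen Γ (s : V)) = _
    rw [rhoT_gen_mem _ (Set.mem_union_right T₁ (s.property.resolve_left hs))]

theorem alpha_rho1 (h : ∀ x ∈ T₁ \ T₂, ∀ y ∈ T₂ \ T₁, ¬ Γ.Adj x y)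
    (x : RACG Γ) (hx : x ∈ Subgroup.closure (racgGen Γ '' T₁)) :
    alpha Γ T₁ T₂ h (rhoT Γ (T₁ ∪ T₂) x) = inj1 Γ T₁ T₂ ⟨x, hx⟩ := by
  induction hx using Subgroup.closure_induction with
  | mem g hg =>
    obtain ⟨s, hs, rfl⟩ := hg
    rw [rhoT_gen_mem _ (Set.mem_union_left T₂ hs), alpha_gen]
    unfold genImg
    rw [dif_pos (show ((⟨s, Set.mem_union_left T₂ hs⟩ : ↥(T₁ ∪ T₂)) : V) ∈ T₁ from hs)]
  | one =>
    rw [map_one, map_one]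
    exact (map_one _).symm
  | mul a b ha hb iha ihb =>
    rw [map_mul, map_mul, iha, ihb, ← map_mul]
    exact congrArg _ (Subtype.ext rfl)
  | inv a ha iha =>
    rw [map_inv, map_inv, iha, ← map_inv]
    exact congrArg _ (Subtype.ext rfl)

theorem alpha_rho2 (h : ∀ x ∈ T₁ \ T₂, ∀ y ∈ T₂ \ T₁, ¬ Γ.Adj x y)
    (x : RACG Γ) (hx : x ∈ Subgroup.closure (racgGen Γ '' T₂)) :
    alpha Γ T₁ T₂ h (rhoT Γ (T₁ ∪ T₂) x) = inj2 Γ T₁ T₂ ⟨x, hx⟩ := by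
  induction hx using Subgroup.closure_induction with
  | mem g hg =>
    obtain ⟨s, hs, rfl⟩ := hg
    rw [rhoT_gen_mem _ (Set.mem_union_right T₁ hs), alpha_gen]
    unfold genImg
    by_cases h1 : ((⟨s, Set.mem_union_right T₁ hs⟩ : ↥(T₁ ∪ T₂)) : V) ∈ T₁
    · rw [dif_pos h1]
      exact inj_agree Γ T₁ T₂ h1 hs
    · rw [dif_neg h1]
  | one =>
    rw [map_one, map_one]
    exact (map_one _).symm
  | mul a b ha hb iha ihb =>
    rw [map_mul, map_mul, iha, ihb, ← map_mul]
    exact congrArg _ (Subtype.ext rfl)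
  | inv a ha iha =>
    rw [map_inv, map_inv, iha, ← map_inv]
    exact congrArg _ (Subtype.ext rfl)

set_option maxHeartbeats 1000000 in
theorem alpha_comp_beta (h : ∀ x ∈ T₁ \ T₂, ∀ y ∈ T₂ \ T₁, ¬ Γ.Adj x y) :
    (alpha Γ T₁ T₂ h).comp (beta Γ T₁ T₂) = MonoidHom.id _ := by
  apply PushoutI.hom_ext
  · rintro (_ | _)
    · exact MonoidHom.ext fun x => by
        simp only [MonoidHom.comp_apply, MonoidHom.id_apply]
        show alpha Γ T₁ T₂ h (beta Γ T₁ T₂ (inj2 Γ T₁ T₂ x)) = inj2 Γ T₁ T₂ x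
        refine (congrArg (alpha Γ T₁ T₂ h) (beta_inj2 Γ T₁ T₂ x)).trans ?_
        exact alpha_rho2 Γ T₁ T₂ h x.1 x.2
    · exact MonoidHom.ext fun x => by
        simp only [MonoidHom.comp_apply, MonoidHom.id_apply]
        show alpha Γ T₁ T₂ h (beta Γ T₁ T₂ (inj1 Γ T₁ T₂ x)) = inj1 Γ T₁ T₂ x
        refine (congrArg (alpha Γ T₁ T₂ h) (beta_inj1 Γ T₁ T₂ x)).trans ?_
        exact alpha_rho1 Γ T₁ T₂ h x.1 x.2
  · exact MonoidHom.ext fun x => by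
      simp only [MonoidHom.comp_apply, MonoidHom.id_apply]
      rw [← PushoutI.of_apply_eq_base (φ := famHom (incl1 Γ T₁ T₂) (incl2 Γ T₁ T₂)) true x]
      show alpha Γ T₁ T₂ h (beta Γ T₁ T₂ (inj1 Γ T₁ T₂ (incl1 Γ T₁ T₂ x))) =
        inj1 Γ T₁ T₂ (incl1 Γ T₁ T₂ x)
      rw [beta_inj1]
      exact alpha_rho1 Γ T₁ T₂ h _ (incl1 Γ T₁ T₂ x).2

end Main
end Stmt16Aux

/-- If no vertex of `T₁ \ T₂` is adjacent to any vertex of `T₂ \ T₁`, then the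
special subgroup `W_{T₁ ∪ T₂}` is the amalgamated free product
`W_{T₁} *_{W_{T₁ ∩ T₂}} W_{T₂}` (amalgamated along the inclusions). -/
theorem stmt16 {V : Type u} [Fintype V] [DecidableEq V] (Γ : SimpleGraph V)
    (T₁ T₂ : Set V)
    (h : ∀ x ∈ T₁ \ T₂, ∀ y ∈ T₂ \ T₁, ¬ Γ.Adj x y) :
    Nonempty (↥(Subgroup.closure (racgGen Γ '' (T₁ ∪ T₂))) ≃*
      AmalgProd
        (Subgroup.inclusion (Subgroup.closure_mono
          (Set.image_mono Set.inter_subset_left)) :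
            ↥(Subgroup.closure (racgGen Γ '' (T₁ ∩ T₂))) →*
            ↥(Subgroup.closure (racgGen Γ '' T₁)))
        (Subgroup.inclusion (Subgroup.closure_mono
          (Set.image_mono Set.inter_subset_right)))) := by
  exact ⟨(Stmt16Aux.eqvT Γ (T₁ ∪ T₂)).symm.trans
    (MonoidHom.toMulEquiv (Stmt16Aux.alpha Γ T₁ T₂ h) (Stmt16Aux.beta Γ T₁ T₂)
      (Stmt16Aux.beta_comp_alpha Γ T₁ T₂ h) (Stmt16Aux.alpha_comp_beta Γ T₁ T₂ h))⟩
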